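/- Let J ≥ 2 and let α ∈ S^{J-1}. For each K ∈ ℕ let Z_K be a random vector in ℝ^J with α + Z_K ∈ S^{J-1} almost surely, let U_1, …, U_K be i.i.d. Uniform(0,1) random variables independent of Z_K, and define T_{Kj} = Σ_{k=1}^K 1(U_k ∈ P_j(α + Z_K)). Let (α_K) be positive reals with α_K/K → 0 as K → ∞, and suppose √(α_K)·Z_K converges in distribution to some probability measure D on ℝ^J. Then (√(α_K)/K)(T_K − Kα) converges in distribution to D. -/

import Mathlib

open MeasureTheory ProbabilityTheory Filter Topology
open scoped ENNReal NNReal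

noncomputable section

/-- The `j`-th interval `P_j(h)` of the partition of `[0,1]` induced by `h ∈ S^{J-1}`:
`P_1(h) = [0, h_1]` and `P_j(h) = (h_1 + ⋯ + h_{j-1}, h_1 + ⋯ + h_j]` for `j ≥ 2`. -/
def Pint {J : ℕ} (h : Fin J → ℝ) (j : Fin J) : Set ℝ :=
  if j.val = 0 then Set.Icc 0 (∑ ℓ ∈ Finset.Iic j, h ℓ)
  else Set.Ioc (∑ ℓ ∈ Finset.Iio j, h ℓ) (∑ ℓ ∈ Finset.Iic j, h ℓ)

open Classical in
/-- The conditionally multinomial count vector `T_K`: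
`T_{Kj} = ∑_{k=1}^K 1(U_k ∈ P_j(Π))`. -/
def countVec {Ω : Type*} {J : ℕ} (K : ℕ) (U : ℕ → Ω → ℝ) (Pi : Ω → Fin J → ℝ)
    (ω : Ω) (j : Fin J) : ℝ :=
  ∑ k ∈ Finset.range K, if U k ω ∈ Pint (Pi ω) j then 1 else 0



lemma sum_Iic_eq {J : ℕ} (h : Fin J → ℝ) (j : Fin J) :
    ∑ ℓ ∈ Finset.Iic j, h ℓ = (∑ ℓ ∈ Finset.Iio j, h ℓ) + h j := by
  rw [← Finset.Iio_insert, Finset.sum_insert (by simp)]; ring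

lemma measurableSet_Pint {J : ℕ} (h : Fin J → ℝ) (j : Fin J) : MeasurableSet (Pint h j) := by
  unfold Pint; split <;> measurability

lemma Pint_volume {J : ℕ} {h : Fin J → ℝ} (hh : h ∈ stdSimplex ℝ (Fin J)) (j : Fin J) :
    (volume.restrict (Set.Icc (0:ℝ) 1)) (Pint h j) = ENNReal.ofReal (h j) := by
  obtain ⟨hnn, hsum⟩ := hh
  have h0 : (0:ℝ) ≤ ∑ ℓ ∈ Finset.Iio j, h ℓ := Finset.sum_nonneg fun i _ => hnn i
  have h1 : ∑ ℓ ∈ Finset.Iic j, h ℓ ≤ 1 := by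
    rw [← hsum]
    exact Finset.sum_le_sum_of_subset_of_nonneg (Finset.subset_univ _) fun i _ _ => hnn i
  have hle : ∑ ℓ ∈ Finset.Iio j, h ℓ ≤ ∑ ℓ ∈ Finset.Iic j, h ℓ := by
    rw [sum_Iic_eq]; linarith [hnn j]
  rw [Measure.restrict_apply (measurableSet_Pint h j)]
  unfold Pint
  split_ifs with hj
  · have hIio : Finset.Iio j = ∅ := by
      ext i
      simp only [Finset.mem_Iio, Finset.notMem_empty, iff_false]
      intro hlt
      exact absurd (Fin.lt_def.mp hlt) (by omega)
    have hIic : ∑ ℓ ∈ Finset.Iic j, h ℓ = h j := by rw [sum_Iic_eq, hIio]; simp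
    have hsub : Set.Icc (0:ℝ) (∑ ℓ ∈ Finset.Iic j, h ℓ) ⊆ Set.Icc (0:ℝ) 1 :=
      fun x hx => ⟨hx.1, le_trans hx.2 h1⟩
    rw [Set.inter_eq_left.mpr hsub, Real.volume_Icc, hIic]
    simp
  · have hsub : Set.Ioc (∑ ℓ ∈ Finset.Iio j, h ℓ) (∑ ℓ ∈ Finset.Iic j, h ℓ) ⊆ Set.Icc (0:ℝ) 1 :=
      fun x hx => ⟨le_trans h0 hx.1.le, le_trans hx.2 h1⟩
    rw [Set.inter_eq_left.mpr hsub, Real.volume_Ioc, sum_Iic_eq]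
    ring_nf

lemma measurableSet_PintJoint {J : ℕ} (α : Fin J → ℝ) (j : Fin J) :
    MeasurableSet {p : ℝ × (Fin J → ℝ) | p.1 ∈ Pint (fun i => α i + p.2 i) j} := by
  unfold Pint
  have hs : ∀ s : Finset (Fin J), Measurable (fun p : ℝ × (Fin J → ℝ) => ∑ ℓ ∈ s, (α ℓ + p.2 ℓ)) := by
    intro s
    exact Finset.measurable_sum s fun ℓ _ => measurable_const.add ((measurable_pi_apply ℓ).comp measurable_snd)
  split_ifs with hj
  · simp only [Set.mem_Icc]
    exact (measurableSet_le measurable_const measurable_fst).inter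
      (measurableSet_le measurable_fst (hs _))
  · simp only [Set.mem_Ioc]
    exact (measurableSet_lt (hs _) measurable_fst).inter
      (measurableSet_le measurable_fst (hs _))

abbrev unifM : Measure ℝ := volume.restrict (Set.Icc (0:ℝ) 1)

instance : IsProbabilityMeasure unifM :=
  ⟨by rw [Measure.restrict_apply_univ, Real.volume_Icc]; norm_num⟩

def Ffun {J : ℕ} (α : Fin J → ℝ) (j : Fin J) (p : ℝ × (Fin J → ℝ)) : ℝ :=
  Set.indicator {q : ℝ × (Fin J → ℝ) | q.1 ∈ Pint (fun i => α i + q.2 i) j} (fun _ => 1) p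
    - (α j + p.2 j)

lemma measurable_Ffun {J : ℕ} (α : Fin J → ℝ) (j : Fin J) : Measurable (Ffun α j) :=
  (measurable_const.indicator (measurableSet_PintJoint α j)).sub
    (measurable_const.add ((measurable_pi_apply j).comp measurable_snd))

lemma mem_simplex_bounds {J : ℕ} {h : Fin J → ℝ} (hh : h ∈ stdSimplex ℝ (Fin J)) (j : Fin J) :
    0 ≤ h j ∧ h j ≤ 1 := by
  refine ⟨hh.1 j, ?_⟩
  rw [← hh.2]
  exact Finset.single_le_sum (fun i _ => hh.1 i) (Finset.mem_univ j)

lemma abs_Ffun_le {J : ℕ} {α : Fin J → ℝ} {j : Fin J} {z : Fin J → ℝ}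
    (hz : (fun i => α i + z i) ∈ stdSimplex ℝ (Fin J)) (u : ℝ) : |Ffun α j (u, z)| ≤ 1 := by
  obtain ⟨h0, h1⟩ := mem_simplex_bounds hz j
  simp only [Ffun]
  by_cases h : (u, z) ∈ {q : ℝ × (Fin J → ℝ) | q.1 ∈ Pint (fun i => α i + q.2 i) j} <;>
    [rw [Set.indicator_of_mem h]; rw [Set.indicator_of_notMem h]] <;>
    rw [abs_le] <;> constructor <;> simp <;> linarith

lemma integral_Ffun {J : ℕ} {α : Fin J → ℝ} (j : Fin J) {z : Fin J → ℝ}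
    (hz : (fun i => α i + z i) ∈ stdSimplex ℝ (Fin J)) :
    ∫ u, Ffun α j (u, z) ∂unifM = 0 := by
  have hind : (fun u => Set.indicator {q : ℝ × (Fin J → ℝ) | q.1 ∈ Pint (fun i => α i + q.2 i) j}
        (fun _ => (1:ℝ)) (u, z)) = (Pint (fun i => α i + z i) j).indicator 1 := by
    ext u
    by_cases h : u ∈ Pint (fun i => α i + z i) j <;>
      simp [Set.indicator_apply, h]
  have hint1 : Integrable (fun u => (Pint (fun i => α i + z i) j).indicator (1 : ℝ → ℝ) u) unifM := by
    refine ⟨(measurable_const.indicator (measurableSet_Pint _ j)).aestronglyMeasurable, ?_⟩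
    apply HasFiniteIntegral.mono' (g := fun _ => (1:ℝ)) (integrable_const (1:ℝ)).2
    filter_upwards with u
    by_cases h : u ∈ Pint (fun i => α i + z i) j <;> simp [Set.indicator_apply, h]
  simp only [Ffun]
  rw [integral_sub (by simpa [hind] using hint1) (integrable_const _)]
  rw [show (fun u : ℝ => Set.indicator {q : ℝ × (Fin J → ℝ) | q.1 ∈ Pint (fun i => α i + q.2 i) j}
        (fun _ => (1:ℝ)) (u, z)) = (Pint (fun i => α i + z i) j).indicator 1 from hind]
  rw [integral_indicator_one (measurableSet_Pint _ j), measureReal_def, Pint_volume hz j, integral_const]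
  simp only [probReal_univ, one_smul, smul_eq_mul]
  rw [ENNReal.toReal_ofReal (mem_simplex_bounds hz j).1]
  ring

lemma measurableSet_simplexShift {J : ℕ} (α : Fin J → ℝ) :
    MeasurableSet {z : Fin J → ℝ | (fun i => α i + z i) ∈ stdSimplex ℝ (Fin J)} := by
  have : IsClosed {z : Fin J → ℝ | (fun i => α i + z i) ∈ stdSimplex ℝ (Fin J)} :=
    (isClosed_stdSimplex ℝ (Fin J)).preimage
      (continuous_pi fun i => continuous_const.add (continuous_apply i))
  exact this.measurableSet

lemma cross_zero {Ω : Type*} [MeasurableSpace Ω] (Pr : Measure Ω) [IsProbabilityMeasure Pr]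
    {J : ℕ} (α : Fin J → ℝ) (j : Fin J)
    (Zf : Ω → Fin J → ℝ) (hZmeas : Measurable Zf)
    (hZval : ∀ᵐ ω ∂Pr, (fun i => α i + Zf ω i) ∈ stdSimplex ℝ (Fin J))
    (Uk Ul : Ω → ℝ) (hUk : Measurable Uk) (hUl : Measurable Ul)
    (hUkunif : Pr.map Uk = unifM) (hUlunif : Pr.map Ul = unifM)
    (hUUindep : IndepFun Uk Ul Pr)
    (hUZ : IndepFun (fun ω => (Uk ω, Ul ω)) Zf Pr) :
    ∫ ω, Ffun α j (Uk ω, Zf ω) * Ffun α j (Ul ω, Zf ω) ∂Pr = 0 := by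
  set ν := Pr.map Zf with hν
  haveI : IsProbabilityMeasure ν := Measure.isProbabilityMeasure_map hZmeas.aemeasurable
  have hmapUU : Pr.map (fun ω => (Uk ω, Ul ω)) = unifM.prod unifM := by
    rw [(indepFun_iff_map_prod_eq_prod_map_map hUk.aemeasurable hUl.aemeasurable).mp hUUindep,
      hUkunif, hUlunif]
  have hmap : Pr.map (fun ω => (Zf ω, (Uk ω, Ul ω))) = ν.prod (unifM.prod unifM) := by
    rw [(indepFun_iff_map_prod_eq_prod_map_map hZmeas.aemeasurable
      (hUk.prodMk hUl).aemeasurable).mp hUZ.symm, hmapUU]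
  set Φ : (Fin J → ℝ) × (ℝ × ℝ) → ℝ :=
    fun q => Ffun α j (q.2.1, q.1) * Ffun α j (q.2.2, q.1) with hΦ
  have hΦmeas : Measurable Φ :=
    ((measurable_Ffun α j).comp (measurable_snd.fst.prodMk measurable_fst)).mul
      ((measurable_Ffun α j).comp (measurable_snd.snd.prodMk measurable_fst))
  have hνae : ∀ᵐ z ∂ν, (fun i => α i + z i) ∈ stdSimplex ℝ (Fin J) :=
    (ae_map_iff hZmeas.aemeasurable (measurableSet_simplexShift α)).mpr hZval
  have hfst : (ν.prod (unifM.prod unifM)).map Prod.fst = ν := by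
    rw [Measure.map_fst_prod]; simp
  have hprodae : ∀ᵐ q ∂(ν.prod (unifM.prod unifM)),
      (fun i => α i + q.1 i) ∈ stdSimplex ℝ (Fin J) := by
    have := (ae_map_iff measurable_fst.aemeasurable (measurableSet_simplexShift α)).mp
      (hfst ▸ hνae)
    exact this
  have hΦint : Integrable Φ (ν.prod (unifM.prod unifM)) := by
    refine ⟨hΦmeas.aestronglyMeasurable, ?_⟩
    apply HasFiniteIntegral.mono' (g := fun _ => (1:ℝ)) (integrable_const (1:ℝ)).2
    filter_upwards [hprodae] with q hq
    calc ‖Φ q‖ = |Ffun α j (q.2.1, q.1)| * |Ffun α j (q.2.2, q.1)| := by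
          rw [hΦ]; exact abs_mul _ _
      _ ≤ 1 := mul_le_one₀ (abs_Ffun_le hq _) (abs_nonneg _) (abs_Ffun_le hq _)
  calc ∫ ω, Ffun α j (Uk ω, Zf ω) * Ffun α j (Ul ω, Zf ω) ∂Pr
      = ∫ ω, Φ (Zf ω, (Uk ω, Ul ω)) ∂Pr := rfl
    _ = ∫ q, Φ q ∂(ν.prod (unifM.prod unifM)) := by
        rw [← hmap]
        exact (integral_map (hZmeas.prodMk (hUk.prodMk hUl)).aemeasurable
          hΦmeas.aestronglyMeasurable).symm
    _ = ∫ z, ∫ uv, Φ (z, uv) ∂(unifM.prod unifM) ∂ν := integral_prod Φ hΦint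
    _ = 0 := by
        apply integral_eq_zero_of_ae
        filter_upwards [hνae] with z hz
        have : ∫ uv, Φ (z, uv) ∂(unifM.prod unifM)
            = (∫ u, Ffun α j (u, z) ∂unifM) * (∫ v, Ffun α j (v, z) ∂unifM) :=
          integral_prod_mul (fun u => Ffun α j (u, z)) (fun v => Ffun α j (v, z))
        rw [this, integral_Ffun j hz]
        simp

lemma second_moment {Ω : Type*} [MeasurableSpace Ω] (Pr : Measure Ω) [IsProbabilityMeasure Pr]
    {J : ℕ} (α : Fin J → ℝ) (j : Fin J)
    (Zf : Ω → Fin J → ℝ) (hZmeas : Measurable Zf)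
    (hZval : ∀ᵐ ω ∂Pr, (fun i => α i + Zf ω i) ∈ stdSimplex ℝ (Fin J))
    (Uf : ℕ → Ω → ℝ) (hUmeas : ∀ k, Measurable (Uf k))
    (hUunif : ∀ k, Pr.map (Uf k) = unifM)
    (hUiid : iIndepFun Uf Pr)
    (hUZ : IndepFun (fun ω k => Uf k ω) Zf Pr)
    (K : ℕ) :
    ∫ ω, (countVec K Uf (fun ω' i => α i + Zf ω' i) ω j - K * (α j + Zf ω j))^2 ∂Pr ≤ K := by
  set G : ℕ → Ω → ℝ := fun k ω => Ffun α j (Uf k ω, Zf ω) with hG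
  have key : ∀ ω, countVec K Uf (fun ω' i => α i + Zf ω' i) ω j - K * (α j + Zf ω j)
      = ∑ k ∈ Finset.range K, G k ω := by
    intro ω
    classical
    have : ∑ k ∈ Finset.range K, G k ω
        = (∑ k ∈ Finset.range K, (if Uf k ω ∈ Pint (fun i => α i + Zf ω i) j then (1:ℝ) else 0))
          - ∑ _k ∈ Finset.range K, (α j + Zf ω j) := by
      rw [← Finset.sum_sub_distrib]
      refine Finset.sum_congr rfl fun k _ => ?_
      by_cases h : Uf k ω ∈ Pint (fun i => α i + Zf ω i) j <;>
        simp [hG, Ffun, Set.indicator_apply, h]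
    rw [this, Finset.sum_const, Finset.card_range, countVec]
    push_cast
    ring
  have hGmeas : ∀ k, Measurable (G k) := fun k =>
    (measurable_Ffun α j).comp ((hUmeas k).prodMk hZmeas)
  have hGbd : ∀ k, ∀ᵐ ω ∂Pr, |G k ω| ≤ 1 := fun k => by
    filter_upwards [hZval] with ω hω using abs_Ffun_le hω _
  have hint : ∀ k l, Integrable (fun ω => G k ω * G l ω) Pr := by
    intro k l
    refine ⟨((hGmeas k).mul (hGmeas l)).aestronglyMeasurable, ?_⟩
    apply HasFiniteIntegral.mono' (g := fun _ => (1:ℝ)) (integrable_const (1:ℝ)).2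
    filter_upwards [hGbd k, hGbd l] with ω h1 h2
    calc ‖G k ω * G l ω‖ = |G k ω| * |G l ω| := abs_mul _ _
      _ ≤ 1 := mul_le_one₀ h1 (abs_nonneg _) h2
  have hsq : ∀ ω, (∑ k ∈ Finset.range K, G k ω)^2
      = ∑ k ∈ Finset.range K, ∑ l ∈ Finset.range K, G k ω * G l ω := by
    intro ω; rw [sq, Finset.sum_mul_sum]
  calc ∫ ω, (countVec K Uf (fun ω' i => α i + Zf ω' i) ω j - K * (α j + Zf ω j))^2 ∂Pr
      = ∫ ω, ∑ k ∈ Finset.range K, ∑ l ∈ Finset.range K, G k ω * G l ω ∂Pr := by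
        congr 1 with ω; rw [key ω, hsq ω]
    _ = ∑ k ∈ Finset.range K, ∑ l ∈ Finset.range K, ∫ ω, G k ω * G l ω ∂Pr := by
        rw [integral_finset_sum _ (fun k _ => integrable_finset_sum _ (fun l _ => hint k l))]
        exact Finset.sum_congr rfl fun k _ => integral_finset_sum _ (fun l _ => hint k l)
    _ ≤ ∑ k ∈ Finset.range K, ∑ l ∈ Finset.range K, (if k = l then (1:ℝ) else 0) := by
        refine Finset.sum_le_sum fun k _ => Finset.sum_le_sum fun l _ => ?_
        by_cases hkl : k = l
        · subst hkl
          simp only [if_pos rfl]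
          have : ∫ ω, G k ω * G k ω ∂Pr ≤ ∫ _ω, (1:ℝ) ∂Pr := by
            apply integral_mono_ae (hint k k) (integrable_const 1)
            filter_upwards [hGbd k] with ω h1
            calc G k ω * G k ω = |G k ω| * |G k ω| := (abs_mul_abs_self _).symm
              _ ≤ 1 := mul_le_one₀ h1 (abs_nonneg _) h1
          simpa using this
        · rw [if_neg hkl]
          have hUU : IndepFun (Uf k) (Uf l) Pr := hUiid.indepFun hkl
          have hφ : Measurable (fun u : ℕ → ℝ => (u k, u l)) :=
            (measurable_pi_apply k).prodMk (measurable_pi_apply l)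
          have hUZ2 : IndepFun (fun ω => (Uf k ω, Uf l ω)) Zf Pr :=
            hUZ.comp hφ measurable_id
          exact le_of_eq (cross_zero Pr α j Zf hZmeas hZval (Uf k) (Uf l)
            (hUmeas k) (hUmeas l) (hUunif k) (hUunif l) hUU hUZ2)
    _ = K := by
        simp only [Finset.sum_ite_eq, Finset.mem_range]
        rw [Finset.sum_congr rfl fun k hk => if_pos (Finset.mem_range.mp hk)]
        simp

lemma slutsky_liminf {Ω : Type*} [MeasurableSpace Ω] {E : Type*}
    [MeasurableSpace E] [PseudoEMetricSpace E] [OpensMeasurableSpace E]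
    (Pr : Measure Ω) [IsProbabilityMeasure Pr]
    (X W : ℕ → Ω → E) (hX : ∀ K, Measurable (X K)) (hW : ∀ K, Measurable (W K))
    (D : Measure E) [IsProbabilityMeasure D]
    (hOpen : ∀ G, IsOpen G → D G ≤ atTop.liminf (fun K => Pr.map (X K) G))
    (hcheb : ∀ c : ℝ≥0∞, 0 < c → c ≠ ⊤ →
      Tendsto (fun K => Pr {ω | c ≤ edist (W K ω) (X K ω)}) atTop (𝓝 0))
    (G : Set E) (hG : IsOpen G) :
    D G ≤ atTop.liminf (fun K => Pr.map (W K) G) := by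
  set L := atTop.liminf (fun K => Pr.map (W K) G) with hL
  set Gd : ℕ → Set E := fun n => {x | ((n:ℝ≥0∞)+1)⁻¹ < EMetric.infEdist x Gᶜ} with hGdDef
  have hGdopen : ∀ n, IsOpen (Gd n) :=
    fun n => isOpen_lt continuous_const EMetric.continuous_infEdist
  have hGdsub : ∀ n, Gd n ⊆ G := by
    intro n x hx
    by_contra hxG
    have h0 : EMetric.infEdist x Gᶜ = 0 := EMetric.infEdist_zero_of_mem hxG
    have hx' : ((n:ℝ≥0∞)+1)⁻¹ < EMetric.infEdist x Gᶜ := hx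
    rw [h0] at hx'
    exact absurd hx' (by simp)
  have hmono : Monotone Gd := by
    intro n m hnm x hx
    have hx' : ((n:ℝ≥0∞)+1)⁻¹ < EMetric.infEdist x Gᶜ := hx
    show ((m:ℝ≥0∞)+1)⁻¹ < EMetric.infEdist x Gᶜ
    refine lt_of_le_of_lt ?_ hx'
    apply ENNReal.inv_le_inv.mpr
    gcongr

  have hunion : (⋃ n, Gd n) = G := by
    apply Set.Subset.antisymm (Set.iUnion_subset hGdsub)
    intro x hxG
    have hpos : 0 < EMetric.infEdist x Gᶜ := by
      refine (EMetric.infEdist_pos_iff_notMem_closure).mpr ?_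
      rw [hG.isClosed_compl.closure_eq]
      simpa using hxG
    obtain ⟨n, hn⟩ := ENNReal.exists_inv_nat_lt hpos.ne'
    refine Set.mem_iUnion.mpr ⟨n, ?_⟩
    show ((n:ℝ≥0∞)+1)⁻¹ < EMetric.infEdist x Gᶜ
    refine lt_of_le_of_lt ?_ hn
    apply ENNReal.inv_le_inv.mpr
    exact le_self_add
  have key : ∀ n K, Pr.map (X K) (Gd n)
      ≤ Pr.map (W K) G + Pr {ω | ((n:ℝ≥0∞)+1)⁻¹ ≤ edist (W K ω) (X K ω)} := by
    intro n K
    rw [Measure.map_apply (hX K) (hGdopen n).measurableSet,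
      Measure.map_apply (hW K) hG.measurableSet]
    refine le_trans (measure_mono ?_) (measure_union_le _ _)
    intro ω hω
    simp only [Set.mem_setOf_eq, hGdDef, Set.mem_preimage] at hω ⊢
    by_cases hWG : W K ω ∈ G
    · exact Or.inl hWG
    · refine Or.inr ?_
      simp only [Set.mem_setOf_eq]
      calc ((n:ℝ≥0∞)+1)⁻¹ ≤ EMetric.infEdist (X K ω) Gᶜ := hω.le
        _ ≤ edist (X K ω) (W K ω) := EMetric.infEdist_le_edist_of_mem hWG
        _ = edist (W K ω) (X K ω) := edist_comm _ _
  have hbound : ∀ n, D (Gd n) ≤ L := by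
    intro n
    apply ENNReal.le_of_forall_pos_le_add
    intro ε hε _
    have hc : (0:ℝ≥0∞) < ((n:ℝ≥0∞)+1)⁻¹ := by simp [ENNReal.inv_pos]
    have hcne : ((n:ℝ≥0∞)+1)⁻¹ ≠ ⊤ := by simp
    have hev : ∀ᶠ K in atTop,
        Pr {ω | ((n:ℝ≥0∞)+1)⁻¹ ≤ edist (W K ω) (X K ω)} ≤ (ε:ℝ≥0∞) := by
      have := (hcheb _ hc hcne).eventually_lt_const (by exact_mod_cast hε : (0:ℝ≥0∞) < ε)
      filter_upwards [this] with K hK using hK.le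
    calc D (Gd n) ≤ atTop.liminf (fun K => Pr.map (X K) (Gd n)) := hOpen _ (hGdopen n)
      _ ≤ atTop.liminf (fun K => Pr.map (W K) G + (ε:ℝ≥0∞)) := by
          refine liminf_le_liminf ?_
          filter_upwards [hev] with K hK
          exact le_trans (key n K) (add_le_add_right hK _)
      _ = L + (ε:ℝ≥0∞) := by
          refine liminf_add_const atTop (fun K => Pr.map (W K) G) (ε:ℝ≥0∞) ?_ ?_
          · exact (isBoundedUnder_of ⟨⊤, fun K => le_top⟩).isCoboundedUnder_ge
          · exact isBoundedUnder_of ⟨0, fun K => zero_le⟩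
  have htend := tendsto_measure_iUnion_atTop (μ := D) hmono
  rw [hunion] at htend
  exact le_of_tendsto htend (Eventually.of_forall hbound)

lemma cheb_coord {Ω : Type*} [MeasurableSpace Ω] (Pr : Measure Ω) [IsProbabilityMeasure Pr]
    (Yj : Ω → ℝ) (B : ℝ) (hint : Integrable (fun ω => (Yj ω)^2) Pr)
    (hB : ∫ ω, (Yj ω)^2 ∂Pr ≤ B)
    (c : ℝ≥0∞) (hc : 0 < c) (hcne : c ≠ ⊤) :
    Pr {ω | c ≤ ENNReal.ofReal |Yj ω|} ≤ ENNReal.ofReal B / c^2 := by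
  have hsub : {ω | c ≤ ENNReal.ofReal |Yj ω|} ⊆ {ω | c^2 ≤ ENNReal.ofReal ((Yj ω)^2)} := by
    intro ω h
    simp only [Set.mem_setOf_eq] at h ⊢
    have h2 := mul_le_mul' h h
    rw [← ENNReal.ofReal_mul (abs_nonneg _), abs_mul_abs_self] at h2
    rw [sq, sq]
    exact h2
  have hml := mul_meas_ge_le_lintegral₀
    (μ := Pr) (f := fun ω => ENNReal.ofReal ((Yj ω)^2))
    (ENNReal.measurable_ofReal.comp_aemeasurable
      (hint.aemeasurable)) (c^2)
  have hlint : ∫⁻ ω, ENNReal.ofReal ((Yj ω)^2) ∂Pr = ENNReal.ofReal (∫ ω, (Yj ω)^2 ∂Pr) :=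
    (ofReal_integral_eq_lintegral_ofReal hint
      (Eventually.of_forall fun ω => sq_nonneg _)).symm
  calc Pr {ω | c ≤ ENNReal.ofReal |Yj ω|}
      ≤ Pr {ω | c^2 ≤ ENNReal.ofReal ((Yj ω)^2)} := measure_mono hsub
    _ ≤ (∫⁻ ω, ENNReal.ofReal ((Yj ω)^2) ∂Pr) / c^2 := by
        rw [ENNReal.le_div_iff_mul_le (Or.inl (pow_ne_zero 2 hc.ne'))
          (Or.inl (ENNReal.pow_ne_top hcne))]
        rw [mul_comm]
        exact hml
    _ ≤ ENNReal.ofReal B / c^2 := by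
        rw [hlint]
        exact ENNReal.div_le_div_right (ENNReal.ofReal_le_ofReal hB) _

/-- Convergence in distribution (weak convergence of the laws): the expectations of every
bounded continuous function converge. -/
def TendstoInDistr {Ω E : Type*} [MeasurableSpace Ω] [MeasurableSpace E] [TopologicalSpace E]
    (Pr : Measure Ω) (X : ℕ → Ω → E) (D : Measure E) : Prop :=
  ∀ f : BoundedContinuousFunction E ℝ,
    Tendsto (fun K => ∫ ω, f (X K ω) ∂Pr) atTop (𝓝 (∫ x, f x ∂D))

/-- `D` is the centered multivariate normal distribution `N(0, S)`: every linear functional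
`x ↦ tᵀx` pushes `D` forward to the real Gaussian with mean `0` and variance `tᵀSt`. -/
def IsCenteredGaussian {ι : Type*} [Fintype ι] (D : Measure (ι → ℝ)) (S : Matrix ι ι ℝ) : Prop :=
  IsProbabilityMeasure D ∧
    ∀ t : ι → ℝ, D.map (fun x => ∑ i, t i * x i) =
      gaussianReal 0 (Real.toNNReal (∑ i, ∑ i', t i * S i i' * t i'))

/-- **Theorem 2.** If `√(α_K)·Z_K ⇝ D` and `α_K/K → 0`, then
`(√(α_K)/K)(T_K − Kα) ⇝ D`. -/
theorem compound_multinomial_limit_mixing_dominates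
    {Ω : Type*} [MeasurableSpace Ω] (Pr : Measure Ω) [IsProbabilityMeasure Pr]
    (J : ℕ) (hJ : 2 ≤ J) (α : Fin J → ℝ) (hα : α ∈ stdSimplex ℝ (Fin J))
    (Z : ℕ → Ω → Fin J → ℝ) (hZmeas : ∀ K, Measurable (Z K))
    (hZval : ∀ K, ∀ᵐ ω ∂Pr, (fun j => α j + Z K ω j) ∈ stdSimplex ℝ (Fin J))
    (U : ℕ → ℕ → Ω → ℝ) (hUmeas : ∀ K k, Measurable (U K k))
    (hUunif : ∀ K k, Pr.map (U K k) = volume.restrict (Set.Icc (0:ℝ) 1))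
    (hUiid : ∀ K, iIndepFun (U K) Pr)
    (hUZindep : ∀ K, IndepFun (fun ω k => U K k ω) (Z K) Pr)
    (a : ℕ → ℝ) (ha : ∀ K, 0 < a K)
    (haK : Tendsto (fun K : ℕ => a K / K) atTop (𝓝 0))
    (D : Measure (Fin J → ℝ)) [IsProbabilityMeasure D]
    (hZconv : TendstoInDistr Pr (fun K ω j => Real.sqrt (a K) * Z K ω j) D) :
    TendstoInDistr Pr
      (fun K ω j =>
        Real.sqrt (a K) / K *
          (countVec K (U K) (fun ω' j' => α j' + Z K ω' j') ω j - K * α j))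
      D := by
  classical
  haveI hJne : Nonempty (Fin J) := ⟨⟨0, by omega⟩⟩
  set X : ℕ → Ω → Fin J → ℝ := fun K ω j => Real.sqrt (a K) * Z K ω j with hXdef
  set W : ℕ → Ω → Fin J → ℝ :=
    fun K ω j =>
      Real.sqrt (a K) / K *
        (countVec K (U K) (fun ω' j' => α j' + Z K ω' j') ω j - K * α j) with hWdef
  have hTmeas : ∀ K j, Measurable
      (fun ω => countVec K (U K) (fun ω' j' => α j' + Z K ω' j') ω j) := by
    intro K j
    have heq : (fun ω => countVec K (U K) (fun ω' j' => α j' + Z K ω' j') ω j)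
        = fun ω => ∑ k ∈ Finset.range K,
            Set.indicator {q : ℝ × (Fin J → ℝ) | q.1 ∈ Pint (fun i => α i + q.2 i) j}
              (fun _ => (1:ℝ)) (U K k ω, Z K ω) := by
      funext ω
      rw [countVec]
      refine Finset.sum_congr rfl fun k _ => ?_
      by_cases h : U K k ω ∈ Pint (fun i => α i + Z K ω i) j <;>
        simp [Set.indicator_apply, h]
    rw [heq]
    exact Finset.measurable_sum _ fun k _ =>
      (measurable_const.indicator (measurableSet_PintJoint α j)).comp
        ((hUmeas K k).prodMk (hZmeas K))
  have hXmeas : ∀ K, Measurable (X K) := fun K =>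
    measurable_pi_lambda _ fun j =>
      measurable_const.mul ((measurable_pi_apply j).comp (hZmeas K))
  have hWmeas : ∀ K, Measurable (W K) := fun K =>
    measurable_pi_lambda _ fun j =>
      measurable_const.mul ((hTmeas K j).sub measurable_const)
  haveI hPX : ∀ K, IsProbabilityMeasure (Pr.map (X K)) := fun K =>
    Measure.isProbabilityMeasure_map (hXmeas K).aemeasurable
  haveI hPW : ∀ K, IsProbabilityMeasure (Pr.map (W K)) := fun K =>
    Measure.isProbabilityMeasure_map (hWmeas K).aemeasurable
  set PD : ProbabilityMeasure (Fin J → ℝ) := ⟨D, inferInstance⟩ with hPDdef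
  set μs : ℕ → ProbabilityMeasure (Fin J → ℝ) := fun K => ⟨Pr.map (X K), hPX K⟩ with hμsdef
  set νs : ℕ → ProbabilityMeasure (Fin J → ℝ) := fun K => ⟨Pr.map (W K), hPW K⟩ with hνsdef
  have hμtendsto : Tendsto μs atTop (𝓝 PD) := by
    refine ProbabilityMeasure.tendsto_iff_forall_integral_tendsto.mpr fun f => ?_
    have hrw : ∀ K, ∫ x, f x ∂(μs K : Measure (Fin J → ℝ)) = ∫ ω, f (X K ω) ∂Pr := fun K =>
      integral_map (hXmeas K).aemeasurable f.continuous.aestronglyMeasurable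
    simp only [hrw]
    exact hZconv f
  -- bounds on the count vector
  have hTbounds : ∀ K ω j,
      0 ≤ countVec K (U K) (fun ω' j' => α j' + Z K ω' j') ω j ∧
      countVec K (U K) (fun ω' j' => α j' + Z K ω' j') ω j ≤ K := by
    intro K ω j
    constructor
    · rw [countVec]
      apply Finset.sum_nonneg
      intro k _
      split <;> norm_num
    · rw [countVec]
      calc ∑ k ∈ Finset.range K,
            (if U K k ω ∈ Pint (fun j' => α j' + Z K ω j') j then (1:ℝ) else 0)
          ≤ ∑ _k ∈ Finset.range K, (1:ℝ) := by
            refine Finset.sum_le_sum fun k _ => ?_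
            split <;> norm_num
        _ = K := by simp
  have hYeq : ∀ K, 1 ≤ K → ∀ ω j, W K ω j - X K ω j
      = Real.sqrt (a K) / K *
          (countVec K (U K) (fun ω' j' => α j' + Z K ω' j') ω j - K * (α j + Z K ω j)) := by
    intro K hK ω j
    have hK0 : (K:ℝ) ≠ 0 := Nat.cast_ne_zero.mpr (by omega)
    show Real.sqrt (a K) / K *
        (countVec K (U K) (fun ω' j' => α j' + Z K ω' j') ω j - K * α j)
      - Real.sqrt (a K) * Z K ω j = _
    field_simp
    ring
  have habs : ∀ K ω j, (fun i => α i + Z K ω i) ∈ stdSimplex ℝ (Fin J) →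
      |countVec K (U K) (fun ω' j' => α j' + Z K ω' j') ω j - K * (α j + Z K ω j)| ≤ 2 * K := by
    intro K ω j hω
    obtain ⟨h0, h1⟩ := mem_simplex_bounds hω j
    obtain ⟨ht0, ht1⟩ := hTbounds K ω j
    have hKnn : (0:ℝ) ≤ K := Nat.cast_nonneg K
    rw [abs_le]
    constructor <;> nlinarith
  have hWXint : ∀ K, 1 ≤ K → ∀ j, Integrable (fun ω => (W K ω j - X K ω j)^2) Pr := by
    intro K hK j
    refine ⟨((((measurable_pi_apply j).comp (hWmeas K)).sub
      ((measurable_pi_apply j).comp (hXmeas K))).pow_const 2).aestronglyMeasurable, ?_⟩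
    apply HasFiniteIntegral.mono'
      (g := fun _ => (|Real.sqrt (a K) / K| * (2 * K))^2) (integrable_const _).2
    filter_upwards [hZval K] with ω hω
    rw [Real.norm_eq_abs, abs_of_nonneg (sq_nonneg _), hYeq K hK ω j, mul_pow, mul_pow]
    have h2 := habs K ω j hω
    have h2' := abs_nonneg (countVec K (U K) (fun ω' j' => α j' + Z K ω' j') ω j
      - K * (α j + Z K ω j))
    have hsq : (countVec K (U K) (fun ω' j' => α j' + Z K ω' j') ω j
        - K * (α j + Z K ω j))^2 ≤ (2 * K)^2 := by
      rw [← sq_abs]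
      have hKnn : (0:ℝ) ≤ 2 * K := by positivity
      nlinarith
    have hc2 : (Real.sqrt (a K) / K)^2 = (|Real.sqrt (a K) / K|)^2 := (sq_abs _).symm
    rw [hc2]
    exact mul_le_mul_of_nonneg_left hsq (sq_nonneg _)
  have hvar : ∀ K, 1 ≤ K → ∀ j, ∫ ω, (W K ω j - X K ω j)^2 ∂Pr ≤ a K / K := by
    intro K hK j
    have hK0 : (0:ℝ) < K := by exact_mod_cast (by omega : 0 < K)
    have heq : ∀ ω, (W K ω j - X K ω j)^2
        = (a K / K^2) * (countVec K (U K) (fun ω' j' => α j' + Z K ω' j') ω j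
            - K * (α j + Z K ω j))^2 := by
      intro ω
      rw [hYeq K hK ω j, mul_pow, div_pow, Real.sq_sqrt (ha K).le]
    calc ∫ ω, (W K ω j - X K ω j)^2 ∂Pr
        = ∫ ω, (a K / K^2) * (countVec K (U K) (fun ω' j' => α j' + Z K ω' j') ω j
            - K * (α j + Z K ω j))^2 ∂Pr := by simp only [heq]
      _ = (a K / K^2) * ∫ ω, (countVec K (U K) (fun ω' j' => α j' + Z K ω' j') ω j
            - K * (α j + Z K ω j))^2 ∂Pr := integral_const_mul _ _
      _ ≤ (a K / K^2) * K := by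
          refine mul_le_mul_of_nonneg_left ?_ (div_nonneg (ha K).le (by positivity))
          exact second_moment Pr α j (Z K) (hZmeas K) (hZval K) (U K) (hUmeas K)
            (fun k => hUunif K k) (hUiid K) (hUZindep K) K
      _ = a K / K := by field_simp
  have hcheb : ∀ c : ℝ≥0∞, 0 < c → c ≠ ⊤ →
      Tendsto (fun K => Pr {ω | c ≤ edist (W K ω) (X K ω)}) atTop (𝓝 0) := by
    intro c hc hct
    have hb0 : Tendsto (fun K => (J:ℝ≥0∞) * (ENNReal.ofReal (a K / K) / c^2))
        atTop (𝓝 0) := by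
      have h1 : Tendsto (fun K : ℕ => ENNReal.ofReal (a K / K)) atTop (𝓝 0) := by
        have := ENNReal.tendsto_ofReal haK
        simpa using this
      have h2 : Tendsto (fun K : ℕ => ENNReal.ofReal (a K / K) / c^2) atTop (𝓝 0) := by
        simp only [div_eq_mul_inv]
        have := ENNReal.Tendsto.mul_const (b := (c^2)⁻¹) h1
          (Or.inr (ENNReal.inv_ne_top.mpr (pow_ne_zero 2 hc.ne')))
        simpa [div_eq_mul_inv] using this
      have h3 := ENNReal.Tendsto.const_mul (a := (J:ℝ≥0∞)) h2
        (Or.inr (ENNReal.natCast_ne_top J))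
      simpa using h3
    refine tendsto_of_tendsto_of_tendsto_of_le_of_le' tendsto_const_nhds hb0
      (Eventually.of_forall fun K => zero_le) ?_
    filter_upwards [eventually_ge_atTop 1] with K hK
    have hJpos : (Finset.univ : Finset (Fin J)).Nonempty := Finset.univ_nonempty
    have hsub : {ω | c ≤ edist (W K ω) (X K ω)}
        ⊆ ⋃ j ∈ (Finset.univ : Finset (Fin J)),
            {ω | c ≤ ENNReal.ofReal |W K ω j - X K ω j|} := by
      intro ω hω
      obtain ⟨j, hjmem, hj⟩ := Finset.exists_mem_eq_sup Finset.univ hJpos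
        (fun j => edist (W K ω j) (X K ω j))
      have hed : edist (W K ω) (X K ω) = edist (W K ω j) (X K ω j) := by
        rw [edist_pi_def]; exact hj
      refine Set.mem_biUnion hjmem ?_
      have h' : c ≤ edist (W K ω j) (X K ω j) := by rw [← hed]; exact hω
      rwa [edist_dist, Real.dist_eq] at h'
    refine le_trans (measure_mono hsub) (le_trans (measure_biUnion_finset_le _ _) ?_)
    have hco : ∀ j : Fin J, Pr {ω | c ≤ ENNReal.ofReal |W K ω j - X K ω j|}
        ≤ ENNReal.ofReal (a K / K) / c^2 := fun j =>
      cheb_coord Pr _ _ (hWXint K hK j) (hvar K hK j) c hc hct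
    calc ∑ j ∈ (Finset.univ : Finset (Fin J)),
          Pr {ω | c ≤ ENNReal.ofReal |W K ω j - X K ω j|}
        ≤ ∑ _j ∈ (Finset.univ : Finset (Fin J)), ENNReal.ofReal (a K / K) / c^2 :=
          Finset.sum_le_sum fun j _ => hco j
      _ = (J:ℝ≥0∞) * (ENNReal.ofReal (a K / K) / c^2) := by
          rw [Finset.sum_const, Finset.card_univ, Fintype.card_fin, nsmul_eq_mul]
  have hνtendsto : Tendsto νs atTop (𝓝 PD) := by
    apply tendsto_of_forall_isOpen_le_liminf
    intro G hG
    have hENN : D G ≤ atTop.liminf (fun K => Pr.map (W K) G) := by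
      refine slutsky_liminf Pr X W hXmeas hWmeas D ?_ hcheb G hG
      intro G' hG'
      exact ProbabilityMeasure.le_liminf_measure_open_of_tendsto hμtendsto hG'
    have aux : (ENNReal.ofNNReal (atTop.liminf (fun K => νs K G)))
        = atTop.liminf (fun K => ((νs K G : ℝ≥0) : ℝ≥0∞)) := by
      refine Monotone.map_liminf_of_continuousAt (F := atTop) ENNReal.coe_mono
        (fun K => νs K G) ?_ ?_ ?_
      · exact ENNReal.continuous_coe.continuousAt
      · exact IsBoundedUnder.isCoboundedUnder_ge ⟨1, by simp⟩
      · exact ⟨0, by simp⟩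
    rw [← ENNReal.coe_le_coe, aux]
    simp only [ProbabilityMeasure.ennreal_coeFn_eq_coeFn_toMeasure]
    exact hENN
  intro f
  have hrw : ∀ K, ∫ ω, f (W K ω) ∂Pr = ∫ x, f x ∂(νs K : Measure (Fin J → ℝ)) := fun K =>
    (integral_map (hWmeas K).aemeasurable f.continuous.aestronglyMeasurable).symm
  have := ProbabilityMeasure.tendsto_iff_forall_integral_tendsto.mp hνtendsto f
  simp only [← hrw] at this
  exact this


end
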